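/- If a chord diagram contains a trigon of type B, then its reductivity is at most 3. (Paper's Lemma 2.4: if a spherical curve P has a trigon of type B, then r(P) ≤ 3.) -/

import Mathlib

/-!
Chord diagrams modeling spherical curves (Gauss diagrams).

A chord diagram with `n` chords is a fixed-point-free involution `f` on the
cyclically ordered set `ZMod (2*n)`; the unordered pairs `{a, f a}` are its chords.
-/

namespace SphericalCurveReductivity

/-- `x` lies in the open arc from `a` to `b` (in the positive cyclic direction). -/
def InArc {N : ℕ} (a b x : ZMod N) : Prop :=
  0 < (x - a).val ∧ (x - a).val < (b - a).val

/-- The chord `{a, f a}` crosses the chord `{c, f c}`: the four endpoints are pairwise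
distinct and exactly one of `c`, `f c` lies in the open arc from `a` to `f a`. -/
def Crosses {N : ℕ} (f : ZMod N → ZMod N) (a c : ZMod N) : Prop :=
  c ≠ a ∧ c ≠ f a ∧ f c ≠ a ∧ f c ≠ f a ∧
    Xor' (InArc a (f a) c) (InArc a (f a) (f c))

/-- A chord diagram is reducible if some chord crosses no other chord. -/
def Reducible {N : ℕ} (f : ZMod N → ZMod N) : Prop :=
  ∃ a, ∀ c, ¬ Crosses f a c

/-- The embedding of the points of the new chord diagram (after the I-move at the
chord `{a, b}`) into the old one: the points `a`, `b` are deleted and the points of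
the open arc from `a` to `b` appear in reversed order, followed by the points of the
open arc from `b` to `a` in their original order. -/
def imoveEmb (n : ℕ) (a b : ZMod (2 * n)) (k : ZMod (2 * (n - 1))) : ZMod (2 * n) :=
  if k.val + 1 < (b - a).val then a + (((b - a).val - 1 - k.val : ℕ) : ZMod (2 * n))
  else a + ((k.val + 2 : ℕ) : ZMod (2 * n))

/-- The induced map of points of the old chord diagram (other than `a`, `b`) to points
of the new chord diagram after the I-move at the chord `{a, b}`; inverse to `imoveEmb`. -/
def imoveProj (n : ℕ) (a b : ZMod (2 * n)) (x : ZMod (2 * n)) : ZMod (2 * (n - 1)) :=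
  if (x - a).val < (b - a).val then (((b - a).val - 1 - (x - a).val : ℕ) : ZMod (2 * (n - 1)))
  else (((x - a).val - 2 : ℕ) : ZMod (2 * (n - 1)))

/-- The I-move (inverse-half-twisted splice) at the chord `{a, f a}`: delete the two
points `a`, `f a` and reverse the order of the points along the open arc from `a`
to `f a`, producing a chord diagram with `n - 1` chords. -/
def IMove {n : ℕ} (f : ZMod (2 * n) → ZMod (2 * n)) (a : ZMod (2 * n))
    (k : ZMod (2 * (n - 1))) : ZMod (2 * (n - 1)) :=
  imoveProj n a (f a) (f (imoveEmb n a (f a) k))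

/-- `ReductivityLe m f` : the reductivity of the chord diagram `f` is at most `m`,
i.e. at most `m` successive I-moves transform `f` into a reducible chord diagram. -/
def ReductivityLe : ℕ → ∀ {n : ℕ}, (ZMod (2 * n) → ZMod (2 * n)) → Prop
  | 0, _, f => Reducible f
  | m + 1, n, f => Reducible f ∨ ∃ a : ZMod (2 * n), ReductivityLe m (IMove f a)

/-- An incoherent bigon: the two chords `{i, j}` and `{i+1, j+1}` with the four
endpoints pairwise distinct. -/
def IncoherentBigon {N : ℕ} (f : ZMod N → ZMod N) (i j : ZMod N) : Prop :=
  f i = j ∧ f (i + 1) = j + 1 ∧ ({i, j, i + 1, j + 1} : Finset (ZMod N)).card = 4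

/-- A coherent bigon: the two chords `{i, j+1}` and `{i+1, j}` with the four
endpoints pairwise distinct. -/
def CoherentBigon {N : ℕ} (f : ZMod N → ZMod N) (i j : ZMod N) : Prop :=
  f i = j + 1 ∧ f (i + 1) = j ∧ ({i, j, i + 1, j + 1} : Finset (ZMod N)).card = 4

/-- The six endpoints of a trigon with corners at the consecutive pairs
`(i, i+1)`, `(j, j+1)`, `(k, k+1)`. -/
def trigonSet {N : ℕ} (i j k : ZMod N) : Finset (ZMod N) :=
  {i, i + 1, j, j + 1, k, k + 1}

/-- A trigon: three chords whose six endpoints form the three pairs of cyclically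
consecutive points `(i, i+1)`, `(j, j+1)`, `(k, k+1)` (pairwise distinct), such that no
chord joins the two points of one of these pairs, so that the three chords connect the
three consecutive pairs in a triangle. -/
def Trigon {N : ℕ} (f : ZMod N → ZMod N) (i j k : ZMod N) : Prop :=
  (trigonSet i j k).card = 6 ∧
  (∀ x ∈ trigonSet i j k, f x ∈ trigonSet i j k) ∧
  f i ≠ i + 1 ∧ f j ≠ j + 1 ∧ f k ≠ k + 1

/-- A representative point of the third chord of a trigon (the chord not containing
`i` nor `i + 1`). -/
def trigonThird {N : ℕ} (f : ZMod N → ZMod N) (i j : ZMod N) : ZMod N :=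
  if j = f i ∨ j = f (i + 1) then j + 1 else j

/-- Exactly two of three propositions hold. -/
def ExactlyTwo (p q r : Prop) : Prop :=
  (p ∧ q ∧ ¬r) ∨ (p ∧ ¬q ∧ r) ∨ (¬p ∧ q ∧ r)

/-- Exactly one of three propositions holds. -/
def ExactlyOne (p q r : Prop) : Prop :=
  (p ∧ ¬q ∧ ¬r) ∨ (¬p ∧ q ∧ ¬r) ∨ (¬p ∧ ¬q ∧ r)

/-- Trigon of type A: exactly two of the three pairs of its chords cross. -/
def TrigonA {N : ℕ} (f : ZMod N → ZMod N) (i j k : ZMod N) : Prop :=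
  Trigon f i j k ∧
    ExactlyTwo (Crosses f i (i + 1)) (Crosses f i (trigonThird f i j))
      (Crosses f (i + 1) (trigonThird f i j))

/-- Trigon of type B: exactly one pair of its chords crosses. -/
def TrigonB {N : ℕ} (f : ZMod N → ZMod N) (i j k : ZMod N) : Prop :=
  Trigon f i j k ∧
    ExactlyOne (Crosses f i (i + 1)) (Crosses f i (trigonThird f i j))
      (Crosses f (i + 1) (trigonThird f i j))

/-- Trigon of type C: its three chords pairwise cross. -/
def TrigonC {N : ℕ} (f : ZMod N → ZMod N) (i j k : ZMod N) : Prop :=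
  Trigon f i j k ∧
    Crosses f i (i + 1) ∧ Crosses f i (trigonThird f i j) ∧
      Crosses f (i + 1) (trigonThird f i j)

/-- Trigon of type D: no two of its chords cross. -/
def TrigonD {N : ℕ} (f : ZMod N → ZMod N) (i j k : ZMod N) : Prop :=
  Trigon f i j k ∧
    ¬ Crosses f i (i + 1) ∧ ¬ Crosses f i (trigonThird f i j) ∧
      ¬ Crosses f (i + 1) (trigonThird f i j)

section Toolkit

variable {N : ℕ}

lemma val_one_of_two_le (h : 2 ≤ N) : (1 : ZMod N).val = 1 :=
  ZMod.val_one'' (by omega)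

lemma sub_val_if [NeZero N] (x y : ZMod N) :
    (x - y).val = if y.val ≤ x.val then x.val - y.val else x.val + N - y.val := by
  split
  · exact ZMod.val_sub ‹_›
  · have hy : y ≠ 0 := by
      rintro rfl
      simp at *
    haveI : NeZero y := ⟨hy⟩
    have hx := ZMod.val_lt x
    have hy' := ZMod.val_lt y
    rw [sub_eq_add_neg, ZMod.val_add, ZMod.val_neg_of_ne_zero]
    rw [Nat.mod_eq_of_lt (by omega)]
    omega

lemma q_eq_iff [NeZero N] (b0 x y : ZMod N) : (x - b0).val = (y - b0).val ↔ x = y :=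
  ⟨fun h => sub_left_inj.mp (ZMod.val_injective N h), fun h => by rw [h]⟩

lemma q_ne_zero_iff [NeZero N] (b0 x : ZMod N) : (x - b0).val ≠ 0 ↔ x ≠ b0 := by
  rw [Ne, ZMod.val_eq_zero, sub_eq_zero]

lemma q_succ [NeZero N] (hN : 2 ≤ N) (b0 x : ZMod N) :
    (x + 1 - b0).val = if (x - b0).val + 1 = N then 0 else (x - b0).val + 1 := by
  have h : x + 1 - b0 = (x - b0) + 1 := by ring
  rw [h, ZMod.val_add, val_one_of_two_le hN]
  have := ZMod.val_lt (x - b0)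
  split
  · rw [‹(x - b0).val + 1 = N›]
    simp
  · exact Nat.mod_eq_of_lt (by omega)

end Toolkit

section Splice

variable {n : ℕ} {a b : ZMod (2 * n)}

lemma emb_sub_val (hn : 2 ≤ n) (k : ZMod (2 * (n - 1))) :
    (imoveEmb n a b k - a).val =
      if k.val + 1 < (b - a).val then (b - a).val - 1 - k.val else k.val + 2 := by
  haveI : NeZero (2 * n) := ⟨by omega⟩
  haveI : NeZero (2 * (n - 1)) := ⟨by omega⟩
  have hd : (b - a).val < 2 * n := ZMod.val_lt _
  have hk : k.val < 2 * (n - 1) := ZMod.val_lt _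
  unfold imoveEmb
  split <;> rw [add_sub_cancel_left, ZMod.val_natCast] <;> exact Nat.mod_eq_of_lt (by omega)

lemma emb_ne_a (hn : 2 ≤ n) (hba : b ≠ a) (k : ZMod (2 * (n - 1))) :
    imoveEmb n a b k ≠ a := by
  haveI : NeZero (2 * n) := ⟨by omega⟩
  intro he
  have h := emb_sub_val (a := a) (b := b) hn k
  rw [he] at h
  simp only [sub_self, ZMod.val_zero] at h
  have hd0 : (b - a).val ≠ 0 := (q_ne_zero_iff a b).mpr hba
  split at h <;> omega

lemma emb_ne_b (hn : 2 ≤ n) (hba : b ≠ a) (k : ZMod (2 * (n - 1))) :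
    imoveEmb n a b k ≠ b := by
  haveI : NeZero (2 * n) := ⟨by omega⟩
  intro he
  have h := emb_sub_val (a := a) (b := b) hn k
  rw [he] at h
  split at h <;> omega

lemma proj_val (hn : 2 ≤ n) (hba : b ≠ a) (x : ZMod (2 * n)) (hxa : x ≠ a) (hxb : x ≠ b) :
    (imoveProj n a b x).val =
      if (x - a).val < (b - a).val then (b - a).val - 1 - (x - a).val else (x - a).val - 2 := by
  haveI : NeZero (2 * n) := ⟨by omega⟩
  haveI : NeZero (2 * (n - 1)) := ⟨by omega⟩
  have hpx : (x - a).val < 2 * n := ZMod.val_lt _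
  have hd : (b - a).val < 2 * n := ZMod.val_lt _
  have hpx0 : (x - a).val ≠ 0 := (q_ne_zero_iff a x).mpr hxa
  have hd0 : (b - a).val ≠ 0 := (q_ne_zero_iff a b).mpr hba
  have hpxd : (x - a).val ≠ (b - a).val := fun h => hxb ((q_eq_iff a x b).mp h)
  unfold imoveProj
  split <;> rw [ZMod.val_natCast] <;> exact Nat.mod_eq_of_lt (by omega)

lemma proj_emb (hn : 2 ≤ n) (hba : b ≠ a) (k : ZMod (2 * (n - 1))) :
    imoveProj n a b (imoveEmb n a b k) = k := by
  haveI : NeZero (2 * n) := ⟨by omega⟩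
  haveI : NeZero (2 * (n - 1)) := ⟨by omega⟩
  apply ZMod.val_injective
  rw [proj_val hn hba _ (emb_ne_a hn hba k) (emb_ne_b hn hba k), emb_sub_val hn k]
  have hk : k.val < 2 * (n - 1) := ZMod.val_lt _
  have hd : (b - a).val < 2 * n := ZMod.val_lt _
  have hd0 : (b - a).val ≠ 0 := (q_ne_zero_iff a b).mpr hba
  split_ifs <;> omega

lemma emb_proj (hn : 2 ≤ n) (hba : b ≠ a) (x : ZMod (2 * n)) (hxa : x ≠ a) (hxb : x ≠ b) :
    imoveEmb n a b (imoveProj n a b x) = x := by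
  haveI : NeZero (2 * n) := ⟨by omega⟩
  have h1 := proj_val hn hba x hxa hxb
  refine (q_eq_iff a _ _).mp ?_
  rw [emb_sub_val hn (imoveProj n a b x), h1]
  have hpx : (x - a).val < 2 * n := ZMod.val_lt _
  have hd : (b - a).val < 2 * n := ZMod.val_lt _
  have hpx0 : (x - a).val ≠ 0 := (q_ne_zero_iff a x).mpr hxa
  have hd0 : (b - a).val ≠ 0 := (q_ne_zero_iff a b).mpr hba
  have hpxd : (x - a).val ≠ (b - a).val := fun h => hxb ((q_eq_iff a x b).mp h)
  split_ifs <;> omega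

lemma imove_apply (hn : 2 ≤ n) (f : ZMod (2 * n) → ZMod (2 * n)) (hfa : f a = b)
    (hba : b ≠ a) (x : ZMod (2 * n)) (hxa : x ≠ a) (hxb : x ≠ b) :
    IMove f a (imoveProj n a b x) = imoveProj n a b (f x) := by
  unfold IMove
  rw [hfa, emb_proj hn hba x hxa hxb]

end Splice


lemma rebase {N : ℕ} [NeZero N] (x y base : ZMod N) :
    (x - y).val = if (y - base).val ≤ (x - base).val
      then (x - base).val - (y - base).val
      else (x - base).val + N - (y - base).val := by
  have h : x - y = (x - base) - (y - base) := by ring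
  rw [h, sub_val_if]

section CardHelpers

variable {α : Type*} [DecidableEq α]

lemma card_le_two (a b : α) : ({a, b} : Finset α).card ≤ 2 :=
  (Finset.card_insert_le _ _).trans (by simp)

lemma card_le_three (a b c : α) : ({a, b, c} : Finset α).card ≤ 3 :=
  (Finset.card_insert_le _ _).trans (by have := card_le_two b c; omega)

lemma card_le_four (a b c d : α) : ({a, b, c, d} : Finset α).card ≤ 4 :=
  (Finset.card_insert_le _ _).trans (by have := card_le_three b c d; omega)

lemma card_le_five (a b c d e : α) : ({a, b, c, d, e} : Finset α).card ≤ 5 :=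
  (Finset.card_insert_le _ _).trans (by have := card_le_four b c d e; omega)

lemma card4_build {a b c d : α} (h1 : a ≠ b) (h2 : a ≠ c) (h3 : a ≠ d) (h4 : b ≠ c)
    (h5 : b ≠ d) (h6 : c ≠ d) : ({a, b, c, d} : Finset α).card = 4 := by
  rw [Finset.card_insert_of_notMem (by simp [h1, h2, h3]),
    Finset.card_insert_of_notMem (by simp [h4, h5]),
    Finset.card_insert_of_notMem (by simp [h6]), Finset.card_singleton]

lemma six_ne {a b c d e f : α} (h : ({a, b, c, d, e, f} : Finset α).card = 6) :
    (a ≠ b ∧ a ≠ c ∧ a ≠ d ∧ a ≠ e ∧ a ≠ f) ∧ (b ≠ c ∧ b ≠ d ∧ b ≠ e ∧ b ≠ f) ∧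
    (c ≠ d ∧ c ≠ e ∧ c ≠ f) ∧ (d ≠ e ∧ d ≠ f) ∧ e ≠ f := by
  have ha : a ∉ ({b, c, d, e, f} : Finset α) := by
    intro hmem
    rw [Finset.insert_eq_self.mpr hmem] at h
    have := card_le_five b c d e f
    omega
  rw [Finset.card_insert_of_notMem ha] at h
  have hb : b ∉ ({c, d, e, f} : Finset α) := by
    intro hmem
    rw [Finset.insert_eq_self.mpr hmem] at h
    have := card_le_four c d e f
    omega
  rw [Finset.card_insert_of_notMem hb] at h
  have hc : c ∉ ({d, e, f} : Finset α) := by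
    intro hmem
    rw [Finset.insert_eq_self.mpr hmem] at h
    have := card_le_three d e f
    omega
  rw [Finset.card_insert_of_notMem hc] at h
  have hd : d ∉ ({e, f} : Finset α) := by
    intro hmem
    rw [Finset.insert_eq_self.mpr hmem] at h
    have := card_le_two e f
    omega
  rw [Finset.card_insert_of_notMem hd] at h
  have he : e ∉ ({f} : Finset α) := by
    intro hmem
    rw [Finset.insert_eq_self.mpr hmem] at h
    simp at h
  simp only [Finset.mem_insert, Finset.mem_singleton, not_or] at ha hb hc hd he
  exact ⟨⟨ha.1, ha.2.1, ha.2.2.1, ha.2.2.2.1, ha.2.2.2.2⟩, ⟨hb.1, hb.2.1, hb.2.2.1, hb.2.2.2⟩,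
    ⟨hc.1, hc.2.1, hc.2.2⟩, ⟨hd.1, hd.2⟩, he⟩

lemma four_ne {a b c d : α} (h : ({a, b, c, d} : Finset α).card = 4) :
    (a ≠ b ∧ a ≠ c ∧ a ≠ d) ∧ (b ≠ c ∧ b ≠ d) ∧ c ≠ d := by
  have ha : a ∉ ({b, c, d} : Finset α) := by
    intro hmem
    rw [Finset.insert_eq_self.mpr hmem] at h
    have := card_le_three b c d
    omega
  rw [Finset.card_insert_of_notMem ha] at h
  have hb : b ∉ ({c, d} : Finset α) := by
    intro hmem
    rw [Finset.insert_eq_self.mpr hmem] at h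
    have := card_le_two c d
    omega
  rw [Finset.card_insert_of_notMem hb] at h
  have hc : c ∉ ({d} : Finset α) := by
    intro hmem
    rw [Finset.insert_eq_self.mpr hmem] at h
    simp at h
  simp only [Finset.mem_insert, Finset.mem_singleton, not_or] at ha hb hc
  exact ⟨⟨ha.1, ha.2.1, ha.2.2⟩, ⟨hb.1, hb.2⟩, hc⟩

end CardHelpers

lemma reducible_of_succ {m : ℕ} (hm : 1 ≤ m) (f : ZMod (2 * m) → ZMod (2 * m))
    (x : ZMod (2 * m)) (hx : f x = x + 1) : Reducible f := by
  haveI : NeZero (2 * m) := ⟨by omega⟩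
  refine ⟨x, fun c hc => ?_⟩
  obtain ⟨h1, h2, h3, h4, h5⟩ := hc
  rw [hx] at h5
  have harc : ∀ z : ZMod (2 * m), ¬ InArc x (x + 1) z := by
    intro z hz
    obtain ⟨hz1, hz2⟩ := hz
    rw [add_sub_cancel_left, val_one_of_two_le (by omega)] at hz2
    omega
  rcases h5 with ⟨hp, _⟩ | ⟨hp, _⟩ <;> exact harc _ hp

lemma reductivityLe_zero {n : ℕ} (f : ZMod (2 * n) → ZMod (2 * n)) :
    ReductivityLe 0 f ↔ Reducible f := Iff.rfl

lemma reductivityLe_succ {m n : ℕ} (f : ZMod (2 * n) → ZMod (2 * n)) :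
    ReductivityLe (m + 1) f ↔ Reducible f ∨ ∃ a, ReductivityLe m (IMove f a) := Iff.rfl

lemma incoherent_red1 {m : ℕ} (hm : 2 ≤ m) (g : ZMod (2 * m) → ZMod (2 * m))
    (I J : ZMod (2 * m)) (hb : IncoherentBigon g I J) : ReductivityLe 1 g := by
  haveI : NeZero (2 * m) := ⟨by omega⟩
  haveI : NeZero (2 * (m - 1)) := ⟨by omega⟩
  obtain ⟨h1, h2, hcard⟩ := hb
  obtain ⟨⟨hIJ, hII1, hIJ1⟩, ⟨hJI1, hJJ1⟩, hI1J1⟩ := four_ne hcard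
  have hD : (J - I).val < 2 * m := ZMod.val_lt _
  have hD0 : (J - I).val ≠ 0 := (q_ne_zero_iff I J).mpr (Ne.symm hIJ)
  have hqI1 : (I + 1 - I).val = 1 := by
    rw [add_sub_cancel_left, val_one_of_two_le (by omega)]
  have hD1 : (J - I).val ≠ 1 := fun h => hJI1 ((q_eq_iff I J (I + 1)).mp (by rw [h, hqI1]))
  have hqJ1 := q_succ (N := 2 * m) (by omega) I J
  have hDtop : (J - I).val + 1 ≠ 2 * m := by
    intro h
    rw [if_pos h] at hqJ1
    exact ((q_ne_zero_iff I (J + 1)).mpr (fun e => hIJ1 e.symm)) hqJ1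
  rw [if_neg hDtop] at hqJ1
  rw [reductivityLe_succ]
  refine Or.inr ⟨I, ?_⟩
  rw [reductivityLe_zero]
  apply reducible_of_succ (by omega) _ (imoveProj m I J (I + 1))
  rw [imove_apply hm g h1 (Ne.symm hIJ) (I + 1) (Ne.symm hII1) (Ne.symm hJI1), h2]
  have hpI1 : (imoveProj m I J (I + 1)).val = (J - I).val - 2 := by
    rw [proj_val hm (Ne.symm hIJ) (I + 1) (Ne.symm hII1) (Ne.symm hJI1), hqI1,
      if_pos (by omega)]
    omega
  have hpJ1 : (imoveProj m I J (J + 1)).val = (J - I).val - 1 := by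
    rw [proj_val hm (Ne.symm hIJ) (J + 1) (fun e => hIJ1 e.symm) (Ne.symm hJJ1), hqJ1,
      if_neg (by omega)]
    omega
  apply ZMod.val_injective
  rw [hpJ1, ZMod.val_add, hpI1, val_one_of_two_le (by omega), Nat.mod_eq_of_lt (by omega)]
  omega

lemma val_neg_one_eq {N : ℕ} [NeZero N] (hN : 2 ≤ N) : (-1 : ZMod N).val = N - 1 := by
  haveI : Fact (1 < N) := ⟨by omega⟩
  haveI : NeZero (1 : ZMod N) := ⟨one_ne_zero⟩
  rw [ZMod.val_neg_of_ne_zero, ZMod.val_one]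

lemma proj_inj {n : ℕ} {a b : ZMod (2 * n)} (hn : 2 ≤ n) (hba : b ≠ a)
    {x y : ZMod (2 * n)} (hxa : x ≠ a) (hxb : x ≠ b) (hya : y ≠ a) (hyb : y ≠ b)
    (h : imoveProj n a b x = imoveProj n a b y) : x = y := by
  rw [← emb_proj hn hba x hxa hxb, ← emb_proj hn hba y hya hyb, h]

lemma splice_bigon {m : ℕ} (hm : 2 ≤ m) (f : ZMod (2 * m) → ZMod (2 * m))
    (a u v w w' : ZMod (2 * m)) (hu : f u = w) (hv : f v = w')
    (hcard : ({a, f a, u, v, w, w'} : Finset (ZMod (2 * m))).card = 6)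
    (hadj : (u = a + 1 ∧ v = f a + 1) ∨ (u = f a - 1 ∧ v = a - 1))
    (hww : w' = w + 1 ∨ w = w' + 1) :
    ∃ I J, IncoherentBigon (IMove f a) I J ∨ CoherentBigon (IMove f a) I J := by
  haveI : NeZero (2 * m) := ⟨by omega⟩
  haveI : NeZero (2 * (m - 1)) := ⟨by omega⟩
  obtain ⟨⟨hab, hau, hav, haw, haw'⟩, ⟨hbu, hbv, hbw, hbw'⟩, ⟨huv, huw, huw'⟩,
    ⟨hvw, hvw'⟩, hww''⟩ := six_ne hcard
  have hba : f a ≠ a := Ne.symm hab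
  have hd0 : (f a - a).val ≠ 0 := (q_ne_zero_iff a (f a)).mpr hba
  have hdlt : (f a - a).val < 2 * m := ZMod.val_lt _
  have hqw0 : (w - a).val ≠ 0 := (q_ne_zero_iff a w).mpr (Ne.symm haw)
  have hqw'0 : (w' - a).val ≠ 0 := (q_ne_zero_iff a w').mpr (Ne.symm haw')
  have hqwd : (w - a).val ≠ (f a - a).val := fun h => hbw ((q_eq_iff a w (f a)).mp h).symm
  have hqw'd : (w' - a).val ≠ (f a - a).val := fun h => hbw' ((q_eq_iff a w' (f a)).mp h).symm
  have hqwlt : (w - a).val < 2 * m := ZMod.val_lt _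
  have hqw'lt : (w' - a).val < 2 * m := ZMod.val_lt _
  have projw := proj_val hm hba w (Ne.symm haw) (Ne.symm hbw)
  have projw' := proj_val hm hba w' (Ne.symm haw') (Ne.symm hbw')
  -- the two chords' far endpoints end up adjacent in one of the two orders
  have hwrel : imoveProj m a (f a) w' = imoveProj m a (f a) w + 1 ∨
      imoveProj m a (f a) w = imoveProj m a (f a) w' + 1 := by
    rcases hww with h | h
    · have hq := q_succ (N := 2 * m) (by omega) a w
      rw [← h] at hq
      have hne : (w - a).val + 1 ≠ 2 * m := by
        intro hN
        rw [if_pos hN] at hq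
        exact hqw'0 hq
      rw [if_neg hne] at hq
      rw [hq] at projw' hqw'd
      rcases lt_or_gt_of_ne hqwd with hlt | hgt
      · right
        apply ZMod.val_injective
        rw [projw, if_pos hlt, ZMod.val_add, projw', if_pos (by omega),
          val_one_of_two_le (by omega), Nat.mod_eq_of_lt (by omega)]
        omega
      · left
        apply ZMod.val_injective
        rw [projw', if_neg (by omega), ZMod.val_add, projw, if_neg (by omega),
          val_one_of_two_le (by omega), Nat.mod_eq_of_lt (by omega)]
        omega
    · have hq := q_succ (N := 2 * m) (by omega) a w'
      rw [← h] at hq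
      have hne : (w' - a).val + 1 ≠ 2 * m := by
        intro hN
        rw [if_pos hN] at hq
        exact hqw0 hq
      rw [if_neg hne] at hq
      rw [hq] at projw hqwd
      rcases lt_or_gt_of_ne hqw'd with hlt | hgt
      · left
        apply ZMod.val_injective
        rw [projw', if_pos hlt, ZMod.val_add, projw, if_pos (by omega),
          val_one_of_two_le (by omega), Nat.mod_eq_of_lt (by omega)]
        omega
      · right
        apply ZMod.val_injective
        rw [projw, if_neg (by omega), ZMod.val_add, projw', if_neg (by omega),
          val_one_of_two_le (by omega), Nat.mod_eq_of_lt (by omega)]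
        omega
  -- the near endpoints u, v become adjacent: P, P + 1
  have hgu : IMove f a (imoveProj m a (f a) u) = imoveProj m a (f a) w := by
    rw [imove_apply hm f rfl hba u (Ne.symm hau) (Ne.symm hbu), hu]
  have hgv : IMove f a (imoveProj m a (f a) v) = imoveProj m a (f a) w' := by
    rw [imove_apply hm f rfl hba v (Ne.symm hav) (Ne.symm hbv), hv]
  have projupv : imoveProj m a (f a) v = imoveProj m a (f a) u + 1 ∨
      imoveProj m a (f a) u = imoveProj m a (f a) v + 1 := by
    have proju := proj_val hm hba u (Ne.symm hau) (Ne.symm hbu)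
    have projv := proj_val hm hba v (Ne.symm hav) (Ne.symm hbv)
    have hult := ZMod.val_lt (u - a)
    have hvlt := ZMod.val_lt (v - a)
    rcases hadj with ⟨hu1, hv1⟩ | ⟨hu1, hv1⟩
    · -- FF : u = a + 1, v = f a + 1
      left
      have hqu : (u - a).val = 1 := by
        rw [hu1, add_sub_cancel_left, val_one_of_two_le (by omega)]
      have hd2 : 2 ≤ (f a - a).val := by
        rcases Nat.lt_or_ge (f a - a).val 2 with h | h
        · exfalso
          have : (f a - a).val = 1 := by omega
          rw [← hqu] at this
          exact hbu ((q_eq_iff a (f a) u).mp this)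
        · exact h
      have hqv : (v - a).val = (f a - a).val + 1 := by
        have hq := q_succ (N := 2 * m) (by omega) a (f a)
        rw [← hv1] at hq
        have hne : (f a - a).val + 1 ≠ 2 * m := by
          intro hN
          rw [if_pos hN] at hq
          exact ((q_ne_zero_iff a v).mpr (Ne.symm hav)) hq
        rw [if_neg hne] at hq
        exact hq
      apply ZMod.val_injective
      rw [projv, hqv, if_neg (by omega), ZMod.val_add, proju, hqu, if_pos (by omega),
        val_one_of_two_le (by omega), Nat.mod_eq_of_lt (by omega)]
      omega
    · -- SS : u = f a - 1, v = a - 1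
      right
      have hqu : (u - a).val = (f a - a).val - 1 := by
        have : u - a = f a - a - 1 := by rw [hu1]; ring
        rw [this, ZMod.val_sub (by rw [val_one_of_two_le (by omega)]; omega),
          val_one_of_two_le (by omega)]
      have hqu0 : (u - a).val ≠ 0 := (q_ne_zero_iff a u).mpr (Ne.symm hau)
      have hqv : (v - a).val = 2 * m - 1 := by
        have : v - a = -1 := by rw [hv1]; ring
        rw [this, val_neg_one_eq (by omega)]
      have hdne : (f a - a).val ≠ 2 * m - 1 := by
        intro h
        apply hbv
        apply (q_eq_iff a (f a) v).mp
        rw [hqv, h]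
      apply ZMod.val_injective
      have hprojuval : (imoveProj m a (f a) u).val = 0 := by
        rw [proju, hqu, if_pos (by omega)]
        omega
      have hprojvval : (imoveProj m a (f a) v).val = 2 * (m - 1) - 1 := by
        rw [projv, hqv, if_neg (by omega)]
        omega
      rw [hprojuval, ZMod.val_add, hprojvval, val_one_of_two_le (by omega)]
      rw [Nat.sub_add_cancel (by omega), Nat.mod_self]
  -- distinctness of the four projected points
  have pinj : ∀ x y : ZMod (2 * m), x ≠ a → x ≠ f a → y ≠ a → y ≠ f a → x ≠ y →
      imoveProj m a (f a) x ≠ imoveProj m a (f a) y := by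
    intro x y hxa hxb hya hyb hxy h
    exact hxy (proj_inj hm hba hxa hxb hya hyb h)
  have duv := pinj u v (Ne.symm hau) (Ne.symm hbu) (Ne.symm hav) (Ne.symm hbv) huv
  have duw := pinj u w (Ne.symm hau) (Ne.symm hbu) (Ne.symm haw) (Ne.symm hbw) huw
  have duw' := pinj u w' (Ne.symm hau) (Ne.symm hbu) (Ne.symm haw') (Ne.symm hbw') huw'
  have dvw := pinj v w (Ne.symm hav) (Ne.symm hbv) (Ne.symm haw) (Ne.symm hbw) hvw
  have dvw' := pinj v w' (Ne.symm hav) (Ne.symm hbv) (Ne.symm haw') (Ne.symm hbw') hvw'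
  have dww' := pinj w w' (Ne.symm haw) (Ne.symm hbw) (Ne.symm haw') (Ne.symm hbw') hww''
  rcases projupv with hPQ | hPQ
  · -- proj v = proj u + 1 : chords (proj u ↦ proj w), (proj u + 1 ↦ proj w')
    rcases hwrel with hW | hW
    · -- proj w' = proj w + 1 : incoherent at (proj u, proj w)
      refine ⟨imoveProj m a (f a) u, imoveProj m a (f a) w, Or.inl ⟨hgu, ?_, ?_⟩⟩
      · rw [← hPQ, hgv, hW]
      · rw [← hPQ, ← hW]
        exact card4_build duw duv duw' (Ne.symm dvw) dww' dvw'
    · -- proj w = proj w' + 1 : coherent at (proj u, proj w')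
      refine ⟨imoveProj m a (f a) u, imoveProj m a (f a) w', Or.inr ⟨?_, ?_, ?_⟩⟩
      · rw [hgu, hW]
      · rw [← hPQ, hgv]
      · rw [← hPQ, ← hW]
        exact card4_build duw' duv duw (Ne.symm dvw') (Ne.symm dww') dvw
  · -- proj u = proj v + 1 : chords (proj v ↦ proj w'), (proj v + 1 ↦ proj w)
    rcases hwrel with hW | hW
    · -- proj w' = proj w + 1 : coherent at (proj v, proj w)
      refine ⟨imoveProj m a (f a) v, imoveProj m a (f a) w, Or.inr ⟨?_, ?_, ?_⟩⟩
      · rw [hgv, hW]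
      · rw [← hPQ, hgu]
      · rw [← hPQ, ← hW]
        exact card4_build dvw (Ne.symm duv) dvw' (Ne.symm duw) dww' duw'
    · -- proj w = proj w' + 1 : incoherent at (proj v, proj w')
      refine ⟨imoveProj m a (f a) v, imoveProj m a (f a) w', Or.inl ⟨hgv, ?_, ?_⟩⟩
      · rw [← hPQ, hgu, hW]
      · rw [← hPQ, ← hW]
        exact card4_build dvw' (Ne.symm duv) dvw (Ne.symm duw') (Ne.symm dww') duw

lemma coherent_red2 {m : ℕ} (hm : 2 ≤ m) (g : ZMod (2 * m) → ZMod (2 * m))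
    (hinv : Function.Involutive g) (I J : ZMod (2 * m))
    (hb : CoherentBigon g I J) : ReductivityLe 2 g := by
  haveI : NeZero (2 * m) := ⟨by omega⟩
  obtain ⟨h1, h2, hcard⟩ := hb
  obtain ⟨⟨hIJ, hII1, hIJ1⟩, ⟨hJI1, hJJ1⟩, hI1J1⟩ := four_ne hcard
  rw [reductivityLe_succ]
  by_cases hred : ∀ c, ¬ Crosses g I c
  · exact Or.inl ⟨I, hred⟩
  push_neg at hred
  obtain ⟨c, hc⟩ := hred
  obtain ⟨hc1, hc2, hc3, hc4, hc5⟩ := hc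
  rw [h1] at hc2 hc4 hc5
  set e := g c with he
  have hec : e ≠ c := by
    intro h
    rw [h] at hc5
    rcases hc5 with ⟨hp, hq⟩ | ⟨hp, hq⟩ <;> exact hq hp
  have hgc : g c = e := he.symm
  have hge : g e = c := by rw [he, hinv c]
  have hgJ : g J = I + 1 := by rw [← h2, hinv]
  -- q-coordinates based at I
  have hqI1 : (I + 1 - I).val = 1 := by
    rw [add_sub_cancel_left, val_one_of_two_le (by omega)]
  have hQJ0 : (J - I).val ≠ 0 := (q_ne_zero_iff I J).mpr (Ne.symm hIJ)
  have hQJ1 : (J - I).val ≠ 1 := fun h => hJI1 ((q_eq_iff I J (I + 1)).mp (by rw [h, hqI1]))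
  have hD : (J + 1 - I).val = (J - I).val + 1 := by
    have hq := q_succ (N := 2 * m) (by omega) I J
    have hne : (J - I).val + 1 ≠ 2 * m := by
      intro hN
      rw [if_pos hN] at hq
      exact ((q_ne_zero_iff I (J + 1)).mpr (fun h' => hIJ1 h'.symm)) hq
    rw [if_neg hne] at hq
    exact hq
  have hDlt : (J - I).val + 1 < 2 * m := by
    have := ZMod.val_lt (J + 1 - I)
    omega
  -- arcs
  have harc1 : InArc I (J + 1) (I + 1) := by
    refine ⟨by rw [hqI1]; omega, ?_⟩
    rw [hqI1, hD]
    omega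
  have harcJ : InArc I (J + 1) J := by
    refine ⟨by omega, ?_⟩
    rw [hD]
    omega
  -- c, e avoid the four bigon points
  have hbothin : ¬ (Xor' (InArc I (J + 1) (I + 1)) (InArc I (J + 1) J)) := by
    rintro (⟨hp, hq⟩ | ⟨hp, hq⟩)
    · exact hq harcJ
    · exact hq harc1
  have hcI1 : c ≠ I + 1 := by
    intro h
    have he' : e = J := by rw [he, h, h2]
    rw [h, he'] at hc5
    exact hbothin hc5
  have hcJ : c ≠ J := by
    intro h
    have he' : e = I + 1 := by rw [he, h, hgJ]
    rw [h, he'] at hc5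
    rcases hc5 with ⟨hp, hq⟩ | ⟨hp, hq⟩
    · exact hq harc1
    · exact hq harcJ
  have heI1 : e ≠ I + 1 := by
    intro h
    exact hcJ (by rw [← hge, h, h2])
  have heJ : e ≠ J := by
    intro h
    exact hcI1 (by rw [← hge, h, hgJ])
  have heI : e ≠ I := hc3
  have hcI : c ≠ I := hc1
  have hcJ1 : c ≠ J + 1 := hc2
  have heJ1 : e ≠ J + 1 := hc4
  -- six distinct points, so 2*m ≥ 6
  have hcard6 : ({I, I + 1, J, J + 1, c, e} : Finset (ZMod (2 * m))).card = 6 := by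
    rw [Finset.card_insert_of_notMem (by simp [hII1, hIJ, hIJ1, Ne.symm hcI, Ne.symm heI]),
      Finset.card_insert_of_notMem
        (by simp [Ne.symm hJI1, hI1J1, Ne.symm hcI1, Ne.symm heI1]),
      Finset.card_insert_of_notMem (by simp [hJJ1, Ne.symm hcJ, Ne.symm heJ]),
      Finset.card_insert_of_notMem (by simp [Ne.symm hcJ1, Ne.symm heJ1]),
      Finset.card_insert_of_notMem (by simp [Ne.symm hec]), Finset.card_singleton]
  have h2m : 6 ≤ 2 * m := by
    have h1' := Finset.card_le_univ ({I, I + 1, J, J + 1, c, e} : Finset (ZMod (2 * m)))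
    rw [hcard6, ZMod.card] at h1'
    exact h1'
  haveI : NeZero (2 * (m - 1)) := ⟨by omega⟩
  -- q-values of c and e
  have hC0 : (c - I).val ≠ 0 := (q_ne_zero_iff I c).mpr hcI
  have hE0 : (e - I).val ≠ 0 := (q_ne_zero_iff I e).mpr heI
  have hC1 : (c - I).val ≠ 1 := fun h => hcI1 ((q_eq_iff I c (I + 1)).mp (by rw [h, hqI1]))
  have hE1 : (e - I).val ≠ 1 := fun h => heI1 ((q_eq_iff I e (I + 1)).mp (by rw [h, hqI1]))
  have hCQ : (c - I).val ≠ (J - I).val := fun h => hcJ ((q_eq_iff I c J).mp h)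
  have hEQ : (e - I).val ≠ (J - I).val := fun h => heJ ((q_eq_iff I e J).mp h)
  have hCD : (c - I).val ≠ (J - I).val + 1 := fun h =>
    hcJ1 ((q_eq_iff I c (J + 1)).mp (by rw [h, hD]))
  have hED : (e - I).val ≠ (J - I).val + 1 := fun h =>
    heJ1 ((q_eq_iff I e (J + 1)).mp (by rw [h, hD]))
  have hCE : (c - I).val ≠ (e - I).val := fun h => (hec ((q_eq_iff I e c).mp h.symm))
  have hClt : (c - I).val < 2 * m := ZMod.val_lt _
  have hElt : (e - I).val < 2 * m := ZMod.val_lt _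
  -- p-values (based at c) of the four bigon points and e
  have pI : (I - c).val = 2 * m - (c - I).val := by
    rw [rebase I c I, sub_self, ZMod.val_zero, if_neg (by omega)]
    omega
  have pI1 : (I + 1 - c).val = 2 * m + 1 - (c - I).val := by
    rw [rebase (I + 1) c I, hqI1, if_neg (by omega)]
    omega
  -- the crossing hypothesis
  refine Or.inr ⟨c, ?_⟩
  have pinj : ∀ x y : ZMod (2 * m), x ≠ c → x ≠ e → y ≠ c → y ≠ e → x ≠ y →
      imoveProj m c e x ≠ imoveProj m c e y := fun x y hxc hxe hyc hye hxy h =>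
    hxy (proj_inj hm hec hxc hxe hyc hye h)
  have g1 : IMove g c (imoveProj m c e I) = imoveProj m c e (J + 1) := by
    rw [imove_apply hm g hgc hec I (Ne.symm hcI) (Ne.symm heI), h1]
  have g2 : IMove g c (imoveProj m c e (I + 1)) = imoveProj m c e J := by
    rw [imove_apply hm g hgc hec (I + 1) (Ne.symm hcI1) (Ne.symm heI1), h2]
  have prI := proj_val hm hec I (Ne.symm hcI) (Ne.symm heI)
  have prI1 := proj_val hm hec (I + 1) (Ne.symm hcI1) (Ne.symm heI1)
  have prJ := proj_val hm hec J (Ne.symm hcJ) (Ne.symm heJ)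
  have prJ1 := proj_val hm hec (J + 1) (Ne.symm hcJ1) (Ne.symm heJ1)
  have hmain : ∃ R S, IncoherentBigon (IMove g c) R S := by
    rcases hc5 with ⟨⟨h5a, h5b⟩, h5n⟩ | ⟨⟨h5a, h5b⟩, h5n⟩
    · -- c inside arc (I, J+1), e outside : J-block inside arc (c, e), I-block outside
      rw [hD] at h5b
      simp only [InArc, not_and, not_lt] at h5n
      rw [hD] at h5n
      have hEout : (J - I).val + 1 < (e - I).val := by
        have := h5n (by omega)
        omega
      have pJ : (J - c).val = (J - I).val - (c - I).val := by
        rw [rebase J c I, if_pos (by omega)]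
      have pJ1 : (J + 1 - c).val = (J - I).val + 1 - (c - I).val := by
        rw [rebase (J + 1) c I, hD, if_pos (by omega)]
      have pe : (e - c).val = (e - I).val - (c - I).val := by
        rw [rebase e c I, if_pos (by omega)]
      rw [pI, pe, if_neg (by omega)] at prI
      rw [pI1, pe, if_neg (by omega)] at prI1
      rw [pJ, pe, if_pos (by omega)] at prJ
      rw [pJ1, pe, if_pos (by omega)] at prJ1
      have a1 : imoveProj m c e (I + 1) = imoveProj m c e I + 1 := by
        apply ZMod.val_injective
        rw [prI1, ZMod.val_add, prI, val_one_of_two_le (by omega),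
          Nat.mod_eq_of_lt (by omega)]
        omega
      have a2 : imoveProj m c e J = imoveProj m c e (J + 1) + 1 := by
        apply ZMod.val_injective
        rw [prJ, ZMod.val_add, prJ1, val_one_of_two_le (by omega),
          Nat.mod_eq_of_lt (by omega)]
        omega
      refine ⟨imoveProj m c e I, imoveProj m c e (J + 1), g1, ?_, ?_⟩
      · rw [← a1, ← a2]
        exact g2
      · rw [← a1, ← a2]
        exact card4_build
          (pinj I (J + 1) (Ne.symm hcI) (Ne.symm heI) (Ne.symm hcJ1) (Ne.symm heJ1) hIJ1)
          (pinj I (I + 1) (Ne.symm hcI) (Ne.symm heI) (Ne.symm hcI1) (Ne.symm heI1) hII1)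
          (pinj I J (Ne.symm hcI) (Ne.symm heI) (Ne.symm hcJ) (Ne.symm heJ) hIJ)
          (pinj (J + 1) (I + 1) (Ne.symm hcJ1) (Ne.symm heJ1) (Ne.symm hcI1) (Ne.symm heI1)
            (Ne.symm hI1J1))
          (pinj (J + 1) J (Ne.symm hcJ1) (Ne.symm heJ1) (Ne.symm hcJ) (Ne.symm heJ)
            (Ne.symm hJJ1))
          (pinj (I + 1) J (Ne.symm hcI1) (Ne.symm heI1) (Ne.symm hcJ) (Ne.symm heJ)
            (Ne.symm hJI1))
    · -- e inside arc (I, J+1), c outside : I-block inside arc (c, e), J-block outside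
      rw [hD] at h5b
      simp only [InArc, not_and, not_lt] at h5n
      rw [hD] at h5n
      have hCout : (J - I).val + 1 < (c - I).val := by
        have := h5n (by omega)
        omega
      have pJ : (J - c).val = (J - I).val + 2 * m - (c - I).val := by
        rw [rebase J c I, if_neg (by omega)]
      have pJ1 : (J + 1 - c).val = (J - I).val + 1 + 2 * m - (c - I).val := by
        rw [rebase (J + 1) c I, hD, if_neg (by omega)]
      have pe : (e - c).val = (e - I).val + 2 * m - (c - I).val := by
        rw [rebase e c I, if_neg (by omega)]
      rw [pI, pe, if_pos (by omega)] at prI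
      rw [pI1, pe, if_pos (by omega)] at prI1
      rw [pJ, pe, if_neg (by omega)] at prJ
      rw [pJ1, pe, if_neg (by omega)] at prJ1
      have a1 : imoveProj m c e I = imoveProj m c e (I + 1) + 1 := by
        apply ZMod.val_injective
        rw [prI, ZMod.val_add, prI1, val_one_of_two_le (by omega),
          Nat.mod_eq_of_lt (by omega)]
        omega
      have a2 : imoveProj m c e (J + 1) = imoveProj m c e J + 1 := by
        apply ZMod.val_injective
        rw [prJ1, ZMod.val_add, prJ, val_one_of_two_le (by omega),
          Nat.mod_eq_of_lt (by omega)]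
        omega
      refine ⟨imoveProj m c e (I + 1), imoveProj m c e J, g2, ?_, ?_⟩
      · rw [← a1, ← a2]
        exact g1
      · rw [← a1, ← a2]
        exact card4_build
          (pinj (I + 1) J (Ne.symm hcI1) (Ne.symm heI1) (Ne.symm hcJ) (Ne.symm heJ)
            (Ne.symm hJI1))
          (pinj (I + 1) I (Ne.symm hcI1) (Ne.symm heI1) (Ne.symm hcI) (Ne.symm heI)
            (Ne.symm hII1))
          (pinj (I + 1) (J + 1) (Ne.symm hcI1) (Ne.symm heI1) (Ne.symm hcJ1) (Ne.symm heJ1)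
            hI1J1)
          (pinj J I (Ne.symm hcJ) (Ne.symm heJ) (Ne.symm hcI) (Ne.symm heI) (Ne.symm hIJ))
          (pinj J (J + 1) (Ne.symm hcJ) (Ne.symm heJ) (Ne.symm hcJ1) (Ne.symm heJ1) hJJ1)
          (pinj I (J + 1) (Ne.symm hcI) (Ne.symm heI) (Ne.symm hcJ1) (Ne.symm heJ1) hIJ1)
  obtain ⟨R, S, hRS⟩ := hmain
  exact incoherent_red1 (by omega) (IMove g c) R S hRS

lemma imove_invol {n : ℕ} (hn : 2 ≤ n) (f : ZMod (2 * n) → ZMod (2 * n))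
    (hinv : Function.Involutive f) (hfpf : ∀ z, f z ≠ z) (a : ZMod (2 * n)) :
    Function.Involutive (IMove f a) := by
  intro k
  have hba : f a ≠ a := hfpf a
  set x := imoveEmb n a (f a) k with hx
  have hxa : x ≠ a := emb_ne_a hn hba k
  have hxb : x ≠ f a := emb_ne_b hn hba k
  have hfxa : f x ≠ a := fun h => hxb (by rw [← h, hinv x])
  have hfxb : f x ≠ f a := fun h => hxa (hinv.injective h)
  have hk : IMove f a k = imoveProj n a (f a) (f x) := rfl
  rw [hk, imove_apply hn f rfl hba (f x) hfxa hfxb, hinv x, hx, proj_emb hn hba]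

lemma reductivityLe_mono {m : ℕ} : ∀ {n : ℕ} (f : ZMod (2 * n) → ZMod (2 * n)),
    ReductivityLe m f → ReductivityLe (m + 1) f := by
  induction m with
  | zero =>
    intro n f h
    rw [reductivityLe_zero] at h
    rw [reductivityLe_succ]
    exact Or.inl h
  | succ m ih =>
    intro n f h
    rw [reductivityLe_succ] at h ⊢
    rcases h with h | ⟨a, h⟩
    · exact Or.inl h
    · exact Or.inr ⟨a, ih _ h⟩

lemma crosses_iff_partner {N : ℕ} (f : ZMod N → ZMod N) (a c e : ZMod N)
    (hce : f c = e) (hec : f e = c) : Crosses f a c ↔ Crosses f a e := by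
  unfold Crosses Xor'
  rw [hce, hec]
  unfold Xor; tauto

lemma card6_build {α : Type*} [DecidableEq α] {a b c d e f : α}
    (hab : a ≠ b) (hac : a ≠ c) (had : a ≠ d) (hae : a ≠ e) (haf : a ≠ f)
    (hbc : b ≠ c) (hbd : b ≠ d) (hbe : b ≠ e) (hbf : b ≠ f)
    (hcd : c ≠ d) (hce : c ≠ e) (hcf : c ≠ f)
    (hde : d ≠ e) (hdf : d ≠ f) (hef : e ≠ f) :
    ({a, b, c, d, e, f} : Finset α).card = 6 := by
  rw [Finset.card_insert_of_notMem (by simp [hab, hac, had, hae, haf]),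
    Finset.card_insert_of_notMem (by simp [hbc, hbd, hbe, hbf]),
    Finset.card_insert_of_notMem (by simp [hcd, hce, hcf]),
    Finset.card_insert_of_notMem (by simp [hde, hdf]),
    Finset.card_insert_of_notMem (by simp [hef]), Finset.card_singleton]

lemma allmixed {m : ℕ} (hm : 1 ≤ m) (f : ZMod (2 * m) → ZMod (2 * m))
    (i x y t : ZMod (2 * m))
    (hfi : f i = x + 1) (hfi1 : f (i + 1) = y) (hfx : f x = y + 1) (hfy1 : f (y + 1) = x)
    (hcard : ({i, i + 1, x, x + 1, y, y + 1} : Finset (ZMod (2 * m))).card = 6)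
    (ht : t = x ∨ t = y + 1) :
    ¬ ExactlyOne (Crosses f i (i + 1)) (Crosses f i t) (Crosses f (i + 1) t) := by
  haveI : NeZero (2 * m) := ⟨by omega⟩
  have h2m : 6 ≤ 2 * m := by
    have h1' := Finset.card_le_univ ({i, i + 1, x, x + 1, y, y + 1} : Finset (ZMod (2 * m)))
    rw [hcard, ZMod.card] at h1'
    exact h1'
  obtain ⟨⟨d1, d2, d3, d4, d5⟩, ⟨d6, d7, d8, d9⟩, ⟨d10, d11, d12⟩, ⟨d13, d14⟩, d15⟩ :=
    six_ne hcard
  -- reduce t to x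
  have hredt : (Crosses f i t ↔ Crosses f i x) ∧ (Crosses f (i + 1) t ↔ Crosses f (i + 1) x) := by
    rcases ht with rfl | rfl
    · exact ⟨Iff.rfl, Iff.rfl⟩
    · exact ⟨crosses_iff_partner f i (y + 1) x hfy1 hfx,
        crosses_iff_partner f (i + 1) (y + 1) x hfy1 hfx⟩
  -- q-coordinates based at i
  have hq1 : (i + 1 - i).val = 1 := by
    rw [add_sub_cancel_left, val_one_of_two_le (by omega)]
  have hX0 : (x - i).val ≠ 0 := (q_ne_zero_iff i x).mpr (Ne.symm d2)
  have hY0 : (y - i).val ≠ 0 := (q_ne_zero_iff i y).mpr (Ne.symm d4)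
  have hX1 : (x - i).val ≠ 1 := fun h => d6 ((q_eq_iff i x (i + 1)).mp (by rw [h, hq1])).symm
  have hY1 : (y - i).val ≠ 1 := fun h => d8 ((q_eq_iff i y (i + 1)).mp (by rw [h, hq1])).symm
  have hXs : (x + 1 - i).val = (x - i).val + 1 := by
    have hq := q_succ (N := 2 * m) (by omega) i x
    have hne : (x - i).val + 1 ≠ 2 * m := by
      intro hN
      rw [if_pos hN] at hq
      exact ((q_ne_zero_iff i (x + 1)).mpr (Ne.symm d3)) hq
    rw [if_neg hne] at hq
    exact hq
  have hYs : (y + 1 - i).val = (y - i).val + 1 := by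
    have hq := q_succ (N := 2 * m) (by omega) i y
    have hne : (y - i).val + 1 ≠ 2 * m := by
      intro hN
      rw [if_pos hN] at hq
      exact ((q_ne_zero_iff i (y + 1)).mpr (Ne.symm d5)) hq
    rw [if_neg hne] at hq
    exact hq
  have hXY : (x - i).val ≠ (y - i).val := fun h => d11 ((q_eq_iff i x y).mp h)
  have hXY1 : (x - i).val ≠ (y - i).val + 1 := fun h =>
    d12 ((q_eq_iff i x (y + 1)).mp (by rw [h, hYs]))
  have hX1Y : (x - i).val + 1 ≠ (y - i).val := fun h =>
    d13 ((q_eq_iff i (x + 1) y).mp (by rw [hXs, h]))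
  have hXlt : (x - i).val < 2 * m := ZMod.val_lt _
  have hYlt : (y - i).val < 2 * m := ZMod.val_lt _
  -- coordinates based at i+1 (for the third crossing)
  have px : (x - (i + 1)).val = (x - i).val - 1 := by
    have h : x - (i + 1) = (x - i) - 1 := by ring
    rw [h, ZMod.val_sub (by rw [val_one_of_two_le (by omega)]; omega),
      val_one_of_two_le (by omega)]
  have py : (y - (i + 1)).val = (y - i).val - 1 := by
    have h : y - (i + 1) = (y - i) - 1 := by ring
    rw [h, ZMod.val_sub (by rw [val_one_of_two_le (by omega)]; omega),
      val_one_of_two_le (by omega)]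
  have py1 : (y + 1 - (i + 1)).val = (y - i).val := by
    have h : y + 1 - (i + 1) = y - i := by ring
    rw [h]
  intro hone
  rw [hredt.1, hredt.2] at hone
  rcases lt_or_gt_of_ne hXY with hlt | hgt
  · -- order i, x, y : the chords of i and of i+1 cross, and the chords of i and x cross
    have c12 : Crosses f i (i + 1) := by
      refine ⟨Ne.symm d1, ?_, ?_, ?_, ?_⟩
      · rw [hfi]; exact d7
      · rw [hfi1]; exact Ne.symm d4
      · rw [hfi, hfi1]; exact Ne.symm d13
      · rw [hfi, hfi1]
        refine Or.inl ⟨⟨?_, ?_⟩, ?_⟩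
        · rw [hq1]; omega
        · rw [hq1, hXs]; omega
        · rintro ⟨ha, hb⟩
          rw [hXs] at hb
          omega
    have c13 : Crosses f i x := by
      refine ⟨Ne.symm d2, ?_, ?_, ?_, ?_⟩
      · rw [hfi]; exact d10
      · rw [hfx]; exact Ne.symm d5
      · rw [hfi, hfx]; exact Ne.symm d14
      · rw [hfi, hfx]
        refine Or.inl ⟨⟨?_, ?_⟩, ?_⟩
        · omega
        · rw [hXs]; omega
        · rintro ⟨ha, hb⟩
          rw [hXs, hYs] at hb
          omega
    rcases hone with ⟨_, hn2, _⟩ | ⟨hn1, _, _⟩ | ⟨hn1, _, _⟩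
    · exact hn2 c13
    · exact hn1 c12
    · exact hn1 c12
  · -- order i, y, x : no pair among the three chords crosses
    have nc12 : ¬ Crosses f i (i + 1) := by
      rintro ⟨_, _, _, _, hxor⟩
      rw [hfi, hfi1] at hxor
      have harc1 : InArc i (x + 1) (i + 1) :=
        ⟨by rw [hq1]; omega, by rw [hq1, hXs]; omega⟩
      have harcy : InArc i (x + 1) y := by
        refine ⟨by omega, ?_⟩
        rw [hXs]; omega
      rcases hxor with ⟨_, hq⟩ | ⟨_, hq⟩
      · exact hq harcy
      · exact hq harc1
    have nc13 : ¬ Crosses f i x := by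
      rintro ⟨_, _, _, _, hxor⟩
      rw [hfi, hfx] at hxor
      have harcx : InArc i (x + 1) x := by
        refine ⟨by omega, ?_⟩
        rw [hXs]; omega
      have harcy1 : InArc i (x + 1) (y + 1) := by
        refine ⟨?_, ?_⟩
        · rw [hYs]; omega
        · rw [hYs, hXs]; omega
      rcases hxor with ⟨_, hq⟩ | ⟨_, hq⟩
      · exact hq harcy1
      · exact hq harcx
    have nc23 : ¬ Crosses f (i + 1) x := by
      rintro ⟨_, _, _, _, hxor⟩
      rw [hfi1, hfx] at hxor
      rcases hxor with ⟨⟨ha, hb⟩, _⟩ | ⟨⟨ha, hb⟩, _⟩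
      · rw [px, py] at *
        omega
      · rw [py1, py] at *
        omega
    rcases hone with ⟨hc, _, _⟩ | ⟨_, hc, _⟩ | ⟨_, _, hc⟩
    · exact nc12 hc
    · exact nc13 hc
    · exact nc23 hc


/-- If a chord diagram contains a trigon of type B, then its reductivity is at most 3
(Lemma 2.4). -/
theorem trigonB_reductivity_le_three {n : ℕ} (hn : 1 ≤ n)
    (f : ZMod (2 * n) → ZMod (2 * n)) (hinv : Function.Involutive f)
    (hfree : ∀ a, f a ≠ a) (i j k : ZMod (2 * n)) (ht : TrigonB f i j k) :
    ReductivityLe 3 f := by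

  obtain ⟨⟨hcard6, hmaps, hfiA, hfjA, hfkA⟩, hone⟩ := ht
  haveI : NeZero (2 * n) := ⟨by omega⟩
  have hc6 : ({i, i + 1, j, j + 1, k, k + 1} : Finset (ZMod (2 * n))).card = 6 := by
    simpa only [trigonSet] using hcard6
  obtain ⟨⟨e1, e2, e3, e4, e5⟩, ⟨e6, e7, e8, e9⟩, ⟨e10, e11, e12⟩, ⟨e13, e14⟩, e15⟩ :=
    six_ne hc6
  have h2n : 6 ≤ 2 * n := by
    have h1' := Finset.card_le_univ ({i, i + 1, j, j + 1, k, k + 1} : Finset (ZMod (2 * n)))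
    rw [hc6, ZMod.card] at h1'
    exact h1'
  have pel : ∀ z w : ZMod (2 * n), f z = w → f w = z := fun z w h => by
    rw [← h]; exact hinv z
  have hfmem : ∀ z : ZMod (2 * n),
      (z = i ∨ z = i + 1 ∨ z = j ∨ z = j + 1 ∨ z = k ∨ z = k + 1) →
      (f z = i ∨ f z = i + 1 ∨ f z = j ∨ f z = j + 1 ∨ f z = k ∨ f z = k + 1) := by
    intro z hz
    have h1 := hmaps z (by
      simp only [trigonSet, Finset.mem_insert, Finset.mem_singleton]
      exact hz)
    simpa only [trigonSet, Finset.mem_insert, Finset.mem_singleton] using h1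
  rcases hfmem i (Or.inl rfl) with h | h | h | h | h | h
  · exact absurd h (hfree i)
  · exact absurd h hfiA
  · -- f i = j
    rcases hfmem (i + 1) (Or.inr (Or.inl rfl)) with h' | h' | h' | h' | h' | h'
    · exact absurd (pel _ _ h') hfiA
    · exact absurd h' (hfree _)
    · have h1 := pel _ _ h
      have h2 := pel _ _ h'
      rw [h1] at h2
      exact absurd h2 e1
    · exfalso
      rcases hfmem k (Or.inr (Or.inr (Or.inr (Or.inr (Or.inl rfl))))) with
        h'' | h'' | h'' | h'' | h'' | h''
      · exact e11 (h.symm.trans (pel _ _ h''))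
      · exact e13 (h'.symm.trans (pel _ _ h''))
      · exact e4 ((pel _ _ h).symm.trans (pel _ _ h''))
      · exact e8 ((pel _ _ h').symm.trans (pel _ _ h''))
      · exact hfree k h''
      · exact hfkA h''
    · -- M1 : f i = j, f (i+1) = k, f (j+1) = k+1
      have hj1 : f (j + 1) = k + 1 := by
        rcases hfmem (j + 1) (Or.inr (Or.inr (Or.inr (Or.inl rfl)))) with
          h'' | h'' | h'' | h'' | h'' | h''
        · exact absurd (h.symm.trans (pel _ _ h'')) e10
        · exact absurd (h'.symm.trans (pel _ _ h'')) (Ne.symm e13)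
        · exact absurd (pel _ _ h'') hfjA
        · exact absurd h'' (hfree _)
        · exact absurd ((pel _ _ h').symm.trans (pel _ _ h'')) e7
        · exact h''
      rw [reductivityLe_succ]
      refine Or.inr ⟨i, ?_⟩
      obtain ⟨R, S, hbig⟩ := splice_bigon (by omega) f i (i + 1) (j + 1) k (k + 1) h' hj1
        (by rw [h]
            exact card6_build e2 e1 e3 e4 e5 (Ne.symm e6) e10 e11 e12 e7 e8 e9 e13 e14 e15)
        (Or.inl ⟨rfl, by rw [h]⟩) (Or.inl rfl)
      rcases hbig with hbg | hbg
      · exact reductivityLe_mono _ (incoherent_red1 (by omega) _ R S hbg)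
      · exact coherent_red2 (by omega) _ (imove_invol (by omega) f hinv hfree i) R S hbg
    · -- M2 : f i = j, f (i+1) = k+1, f (j+1) = k
      have hj1 : f (j + 1) = k := by
        rcases hfmem (j + 1) (Or.inr (Or.inr (Or.inr (Or.inl rfl)))) with
          h'' | h'' | h'' | h'' | h'' | h''
        · exact absurd (h.symm.trans (pel _ _ h'')) e10
        · exact absurd (h'.symm.trans (pel _ _ h'')) (Ne.symm e14)
        · exact absurd (pel _ _ h'') hfjA
        · exact absurd h'' (hfree _)
        · exact h''
        · exact absurd ((pel _ _ h').symm.trans (pel _ _ h'')) e7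
      rw [reductivityLe_succ]
      refine Or.inr ⟨i, ?_⟩
      obtain ⟨R, S, hbig⟩ := splice_bigon (by omega) f i (i + 1) (j + 1) (k + 1) k h' hj1
        (by rw [h]
            exact card6_build e2 e1 e3 e5 e4 (Ne.symm e6) e10 e12 e11 e7 e9 e8 e14 e13
              (Ne.symm e15))
        (Or.inl ⟨rfl, by rw [h]⟩) (Or.inr rfl)
      rcases hbig with hbg | hbg
      · exact reductivityLe_mono _ (incoherent_red1 (by omega) _ R S hbg)
      · exact coherent_red2 (by omega) _ (imove_invol (by omega) f hinv hfree i) R S hbg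
  · -- f i = j + 1
    rcases hfmem (i + 1) (Or.inr (Or.inl rfl)) with h' | h' | h' | h' | h' | h'
    · exact absurd (pel _ _ h') hfiA
    · exact absurd h' (hfree _)
    · -- M3 : f i = j+1, f (i+1) = j, third chord {k, k+1} : impossible
      exfalso
      rcases hfmem k (Or.inr (Or.inr (Or.inr (Or.inr (Or.inl rfl))))) with
        h'' | h'' | h'' | h'' | h'' | h''
      · exact e13 (h.symm.trans (pel _ _ h''))
      · exact e11 (h'.symm.trans (pel _ _ h''))
      · exact e8 ((pel _ _ h').symm.trans (pel _ _ h''))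
      · exact e4 ((pel _ _ h).symm.trans (pel _ _ h''))
      · exact hfree k h''
      · exact hfkA h''
    · have h1 := pel _ _ h
      have h2 := pel _ _ h'
      rw [h1] at h2
      exact absurd h2 e1
    · -- M3' : f i = j+1, f (i+1) = k, f j = k+1 : all chords mixed, contradiction
      have hj : f j = k + 1 := by
        rcases hfmem j (Or.inr (Or.inr (Or.inl rfl))) with
          h'' | h'' | h'' | h'' | h'' | h''
        · exact absurd (h.symm.trans (pel _ _ h'')) (Ne.symm e10)
        · exact absurd (h'.symm.trans (pel _ _ h'')) (Ne.symm e11)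
        · exact absurd h'' (hfree _)
        · exact absurd h'' hfjA
        · exact absurd ((pel _ _ h').symm.trans (pel _ _ h'')) e6
        · exact h''
      have hT : trigonThird f i j = j := by
        rw [trigonThird, if_neg]
        rintro (h'' | h'')
        · rw [h] at h''; exact e10 h''
        · rw [h'] at h''; exact e11 h''
      rw [hT] at hone
      exact absurd hone (allmixed (by omega) f i j k j h h' hj (pel _ _ hj) hc6 (Or.inl rfl))
    · -- M4 : f i = j+1, f (i+1) = k+1, f j = k
      have hj : f j = k := by
        rcases hfmem j (Or.inr (Or.inr (Or.inl rfl))) with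
          h'' | h'' | h'' | h'' | h'' | h''
        · exact absurd (h.symm.trans (pel _ _ h'')) (Ne.symm e10)
        · exact absurd (h'.symm.trans (pel _ _ h'')) (Ne.symm e12)
        · exact absurd h'' (hfree _)
        · exact absurd h'' hfjA
        · exact h''
        · exact absurd ((pel _ _ h').symm.trans (pel _ _ h'')) e6
      rw [reductivityLe_succ]
      refine Or.inr ⟨i + 1, ?_⟩
      obtain ⟨R, S, hbig⟩ := splice_bigon (by omega) f (i + 1) k i j (j + 1) (pel _ _ hj) h
        (by rw [h']
            exact card6_build e9 e8 (Ne.symm e1) e6 e7 (Ne.symm e15) (Ne.symm e5)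
              (Ne.symm e12) (Ne.symm e14) (Ne.symm e4) (Ne.symm e11) (Ne.symm e13) e2 e3 e10)
        (Or.inr ⟨by rw [h', add_sub_cancel_right], by rw [add_sub_cancel_right]⟩)
        (Or.inl rfl)
      rcases hbig with hbg | hbg
      · exact reductivityLe_mono _ (incoherent_red1 (by omega) _ R S hbg)
      · exact coherent_red2 (by omega) _ (imove_invol (by omega) f hinv hfree (i + 1)) R S hbg
  · -- f i = k
    rcases hfmem (i + 1) (Or.inr (Or.inl rfl)) with h' | h' | h' | h' | h' | h'
    · exact absurd (pel _ _ h') hfiA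
    · exact absurd h' (hfree _)
    · -- M5 : f i = k, f (i+1) = j, f (k+1) = j+1
      have hk1 : f (k + 1) = j + 1 := by
        rcases hfmem (k + 1) (Or.inr (Or.inr (Or.inr (Or.inr (Or.inr rfl))))) with
          h'' | h'' | h'' | h'' | h'' | h''
        · exact absurd (h.symm.trans (pel _ _ h'')) e15
        · exact absurd (h'.symm.trans (pel _ _ h'')) e12
        · exact absurd ((pel _ _ h').symm.trans (pel _ _ h'')) e9
        · exact h''
        · exact absurd (pel _ _ h'') hfkA
        · exact absurd h'' (hfree _)
      rw [reductivityLe_succ]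
      refine Or.inr ⟨i, ?_⟩
      obtain ⟨R, S, hbig⟩ := splice_bigon (by omega) f i (i + 1) (k + 1) j (j + 1) h' hk1
        (by rw [h]
            exact card6_build e4 e1 e5 e2 e3 (Ne.symm e8) e15 (Ne.symm e11) (Ne.symm e13)
              e9 e6 e7 (Ne.symm e12) (Ne.symm e14) e10)
        (Or.inl ⟨rfl, by rw [h]⟩) (Or.inl rfl)
      rcases hbig with hbg | hbg
      · exact reductivityLe_mono _ (incoherent_red1 (by omega) _ R S hbg)
      · exact coherent_red2 (by omega) _ (imove_invol (by omega) f hinv hfree i) R S hbg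
    · -- M6 : f i = k, f (i+1) = j+1, f (k+1) = j
      have hk1 : f (k + 1) = j := by
        rcases hfmem (k + 1) (Or.inr (Or.inr (Or.inr (Or.inr (Or.inr rfl))))) with
          h'' | h'' | h'' | h'' | h'' | h''
        · exact absurd (h.symm.trans (pel _ _ h'')) e15
        · exact absurd (h'.symm.trans (pel _ _ h'')) e14
        · exact h''
        · exact absurd ((pel _ _ h').symm.trans (pel _ _ h'')) e9
        · exact absurd (pel _ _ h'') hfkA
        · exact absurd h'' (hfree _)
      rw [reductivityLe_succ]
      refine Or.inr ⟨i, ?_⟩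
      obtain ⟨R, S, hbig⟩ := splice_bigon (by omega) f i (i + 1) (k + 1) (j + 1) j h' hk1
        (by rw [h]
            exact card6_build e4 e1 e5 e3 e2 (Ne.symm e8) e15 (Ne.symm e13) (Ne.symm e11)
              e9 e7 e6 (Ne.symm e14) (Ne.symm e12) (Ne.symm e10))
        (Or.inl ⟨rfl, by rw [h]⟩) (Or.inr rfl)
      rcases hbig with hbg | hbg
      · exact reductivityLe_mono _ (incoherent_red1 (by omega) _ R S hbg)
      · exact coherent_red2 (by omega) _ (imove_invol (by omega) f hinv hfree i) R S hbg
    · have h1 := pel _ _ h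
      have h2 := pel _ _ h'
      rw [h1] at h2
      exact absurd h2 e1
    · exfalso
      rcases hfmem j (Or.inr (Or.inr (Or.inl rfl))) with
        h'' | h'' | h'' | h'' | h'' | h''
      · exact (Ne.symm e11) (h.symm.trans (pel _ _ h''))
      · exact (Ne.symm e12) (h'.symm.trans (pel _ _ h''))
      · exact hfree j h''
      · exact hfjA h''
      · exact e2 ((pel _ _ h).symm.trans (pel _ _ h''))
      · exact e6 ((pel _ _ h').symm.trans (pel _ _ h''))
  · -- f i = k + 1
    rcases hfmem (i + 1) (Or.inr (Or.inl rfl)) with h' | h' | h' | h' | h' | h'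
    · exact absurd (pel _ _ h') hfiA
    · exact absurd h' (hfree _)
    · -- M7 : f i = k+1, f (i+1) = j, f (j+1) = k : all chords mixed, contradiction
      have hj1 : f (j + 1) = k := by
        rcases hfmem (j + 1) (Or.inr (Or.inr (Or.inr (Or.inl rfl)))) with
          h'' | h'' | h'' | h'' | h'' | h''
        · exact absurd (h.symm.trans (pel _ _ h'')) (Ne.symm e14)
        · exact absurd (h'.symm.trans (pel _ _ h'')) e10
        · exact absurd (pel _ _ h'') hfjA
        · exact absurd h'' (hfree _)
        · exact h''
        · exact absurd ((pel _ _ h).symm.trans (pel _ _ h'')) e3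
      have hT : trigonThird f i j = j + 1 := by
        rw [trigonThird, if_pos (Or.inr h'.symm)]
      rw [hT] at hone
      refine absurd hone (allmixed (by omega) f i k j (j + 1) h h' (pel _ _ hj1) hj1 ?_
        (Or.inr rfl))
      exact card6_build e1 e4 e5 e2 e3 e8 e9 e6 e7 e15 (Ne.symm e11) (Ne.symm e13)
        (Ne.symm e12) (Ne.symm e14) e10
    · -- M8 : f i = k+1, f (i+1) = j+1, f j = k
      have hj : f j = k := by
        rcases hfmem j (Or.inr (Or.inr (Or.inl rfl))) with
          h'' | h'' | h'' | h'' | h'' | h''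
        · exact absurd (h.symm.trans (pel _ _ h'')) (Ne.symm e12)
        · exact absurd (h'.symm.trans (pel _ _ h'')) (Ne.symm e10)
        · exact absurd h'' (hfree _)
        · exact absurd h'' hfjA
        · exact h''
        · exact absurd ((pel _ _ h).symm.trans (pel _ _ h'')) e2
      rw [reductivityLe_succ]
      refine Or.inr ⟨i + 1, ?_⟩
      obtain ⟨R, S, hbig⟩ := splice_bigon (by omega) f (i + 1) j i k (k + 1) hj h
        (by rw [h']
            exact card6_build e7 e6 (Ne.symm e1) e8 e9 (Ne.symm e10) (Ne.symm e3) e13 e14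
              (Ne.symm e2) e11 e12 e4 e5 e15)
        (Or.inr ⟨by rw [h', add_sub_cancel_right], by rw [add_sub_cancel_right]⟩)
        (Or.inl rfl)
      rcases hbig with hbg | hbg
      · exact reductivityLe_mono _ (incoherent_red1 (by omega) _ R S hbg)
      · exact coherent_red2 (by omega) _ (imove_invol (by omega) f hinv hfree (i + 1)) R S hbg
    · exfalso
      rcases hfmem j (Or.inr (Or.inr (Or.inl rfl))) with
        h'' | h'' | h'' | h'' | h'' | h''
      · exact (Ne.symm e12) (h.symm.trans (pel _ _ h''))
      · exact (Ne.symm e11) (h'.symm.trans (pel _ _ h''))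
      · exact hfree j h''
      · exact hfjA h''
      · exact e6 ((pel _ _ h').symm.trans (pel _ _ h''))
      · exact e2 ((pel _ _ h).symm.trans (pel _ _ h''))
    · have h1 := pel _ _ h
      have h2 := pel _ _ h'
      rw [h1] at h2
      exact absurd h2 e1

end SphericalCurveReductivity
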